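/- arXiv:1206.1757 — 2 statements merged into one kernel-verified Lean document; each statement's English description precedes it below -/
import Mathlib

section
/- For (q,v) ∈ TS³ with 𝐪 ≠ 0, q0 > 0 and E < 0, the vectors α, β ∈ ℝ⁴ satisfy ⟨α,α⟩ = 1, ⟨β,β⟩ = 1, and ⟨α,β⟩ = 0. Consequently, for any φ ∈ ℝ, the point (x,y) = (α sinφ + β cosφ, ν(−α cosφ + β sinφ)) lies in T⁺S³ = {(x,y) ∈ ℝ⁴×ℝ⁴ : ⟨x,x⟩ = 1, ⟨x,y⟩ = 0, y ≠ 0}. -/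
open Matrix Real

noncomputable section

/-- The spatial (last three) components of a vector in `ℝ⁴`. -/
def sp (q : Fin 4 → ℝ) : Fin 3 → ℝ := fun i => q i.succ

/-- The Euclidean norm on `ℝ³`, written via the dot product. -/
def nrm3 (x : Fin 3 → ℝ) : ℝ := Real.sqrt (x ⬝ᵥ x)

/-- The first standard basis vector `e₀ = (1,0,0,0)` of `ℝ⁴`. -/
def e0 : Fin 4 → ℝ := fun i => if i = 0 then 1 else 0

/-- The (constraint set defining the) tangent bundle `TS³ ⊂ ℝ⁴ × ℝ⁴`. -/
def TS3 : Set ((Fin 4 → ℝ) × (Fin 4 → ℝ)) :=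
  {p | p.1 ⬝ᵥ p.1 = 1 ∧ p.1 ⬝ᵥ p.2 = 0}

/-- Right hand side of the Kepler equations of motion on `S³`:
`v̇ = γ e₀/(1-q₀²)^{3/2} - (⟨v,v⟩ + γ q₀/(1-q₀²)^{3/2}) q`. -/
def keplerRHS (γ : ℝ) (q v : Fin 4 → ℝ) : Fin 4 → ℝ :=
  (γ / (1 - q 0 ^ 2) ^ ((3 : ℝ) / 2)) • e0
    - (v ⬝ᵥ v + γ * q 0 / (1 - q 0 ^ 2) ^ ((3 : ℝ) / 2)) • q

/-- The Kepler Hamiltonian on `S³`: `H = ½⟨v,v⟩ - γ q₀ / (1-q₀²)^{1/2}`. -/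
def Hham (γ : ℝ) (p : (Fin 4 → ℝ) × (Fin 4 → ℝ)) : ℝ :=
  (1 / 2) * (p.2 ⬝ᵥ p.2) - γ * p.1 0 / Real.sqrt (1 - p.1 0 ^ 2)

/-- The angular momentum `𝛍 = 𝐪 × 𝐯`. -/
def mu (p : (Fin 4 → ℝ) × (Fin 4 → ℝ)) : Fin 3 → ℝ :=
  crossProduct (sp p.1) (sp p.2)

/-- The vector `𝛑 = q₀ 𝐯 - v₀ 𝐪`. -/
def pivec (p : (Fin 4 → ℝ) × (Fin 4 → ℝ)) : Fin 3 → ℝ :=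
  p.1 0 • sp p.2 - p.2 0 • sp p.1

/-- The Runge–Lenz vector `𝐀 = 𝛑 × 𝛍 - γ 𝐪/|𝐪|`. -/
def rl (γ : ℝ) (p : (Fin 4 → ℝ) × (Fin 4 → ℝ)) : Fin 3 → ℝ :=
  crossProduct (pivec p) (mu p) - (γ / nrm3 (sp p.1)) • sp p.1

/-- The energy-like integral `E = H - |𝛍|²/2`. -/
def Een (γ : ℝ) (p : (Fin 4 → ℝ) × (Fin 4 → ℝ)) : ℝ :=
  Hham γ p - (mu p ⬝ᵥ mu p) / 2

/-- `ν = γ / √(-2E)`. -/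
def nuLS (γ : ℝ) (p : (Fin 4 → ℝ) × (Fin 4 → ℝ)) : ℝ :=
  γ / Real.sqrt (-2 * Een γ p)


/-- The vector `α` of the Ligon–Schaaf map for the Kepler problem on `S³`. -/
def alphaLS (γ : ℝ) (p : (Fin 4 → ℝ) × (Fin 4 → ℝ)) : Fin 4 → ℝ :=
  Fin.cons ((sp p.1 ⬝ᵥ pivec p) / (nuLS γ p * p.1 0))
    ((nrm3 (sp p.1))⁻¹ • sp p.1 - ((sp p.1 ⬝ᵥ pivec p) / (γ * p.1 0)) • pivec p)

/-- The vector `β` of the Ligon–Schaaf map for the Kepler problem on `S³`. -/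
def betaLS (γ : ℝ) (p : (Fin 4 → ℝ) × (Fin 4 → ℝ)) : Fin 4 → ℝ :=
  Fin.cons (nrm3 (sp p.1) / (γ * p.1 0) * (pivec p ⬝ᵥ pivec p) - 1)
    ((nrm3 (sp p.1) / (nuLS γ p * p.1 0)) • pivec p)

/-- The phase `φ = (𝐪·𝛑)/(ν q₀) = α₀` of the Ligon–Schaaf map. -/
def phiLS (γ : ℝ) (p : (Fin 4 → ℝ) × (Fin 4 → ℝ)) : ℝ :=
  (sp p.1 ⬝ᵥ pivec p) / (nuLS γ p * p.1 0)

/-- The Ligon–Schaaf map `Φ` for the Kepler problem on `S³`. -/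
def PhiLS (γ : ℝ) (p : (Fin 4 → ℝ) × (Fin 4 → ℝ)) : (Fin 4 → ℝ) × (Fin 4 → ℝ) :=
  (Real.sin (phiLS γ p) • alphaLS γ p + Real.cos (phiLS γ p) • betaLS γ p,
   nuLS γ p • (-Real.cos (phiLS γ p) • alphaLS γ p + Real.sin (phiLS γ p) • betaLS γ p))


lemma split_dot (x y : Fin 4 → ℝ) : x ⬝ᵥ y = x 0 * y 0 + sp x ⬝ᵥ sp y := by
  simp [dotProduct, Fin.sum_univ_succ, sp]

lemma cons_dot (a b : ℝ) (u w : Fin 3 → ℝ) :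
    (Fin.cons a u : Fin 4 → ℝ) ⬝ᵥ Fin.cons b w = a * b + u ⬝ᵥ w := by
  simp [dotProduct, Fin.sum_univ_succ]

lemma lagrange (u v : Fin 3 → ℝ) :
    crossProduct u v ⬝ᵥ crossProduct u v = (u ⬝ᵥ u) * (v ⬝ᵥ v) - (u ⬝ᵥ v)^2 := by
  simp [crossProduct, dotProduct, Fin.sum_univ_succ]
  ring

lemma pivec_self (p : (Fin 4 → ℝ) × (Fin 4 → ℝ)) :
    pivec p ⬝ᵥ pivec p = p.1 0^2 * (sp p.2 ⬝ᵥ sp p.2)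
      - 2 * (p.1 0 * p.2 0) * (sp p.1 ⬝ᵥ sp p.2) + p.2 0^2 * (sp p.1 ⬝ᵥ sp p.1) := by
  simp [pivec, sub_dotProduct, dotProduct_sub, smul_dotProduct,
    dotProduct_smul, smul_eq_mul, dotProduct_comm (sp p.1) (sp p.2)]
  ring

lemma core1 (γ ν q0 r s P QQ : ℝ) (hγ : γ ≠ 0) (hν : ν ≠ 0) (hq0 : q0 ≠ 0) (hr : r ≠ 0)
    (hQQ : r^2 = QQ) (hkey : ν^2*(2*γ*q0 - r*P) = γ^2*r) :
    s/(ν*q0)*(s/(ν*q0)) + (r⁻¹*r⁻¹*QQ - 2*(r⁻¹*(s/(γ*q0))*s) + (s/(γ*q0))*(s/(γ*q0))*P) = 1 := by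
  subst hQQ
  field_simp
  linear_combination (-(s^2)) * hkey

lemma core2 (γ ν q0 r P : ℝ) (hγ : γ ≠ 0) (hν : ν ≠ 0) (hq0 : q0 ≠ 0) (hr : r ≠ 0)
    (hkey : ν^2*(2*γ*q0 - r*P) = γ^2*r) :
    (r/(γ*q0)*P - 1)*(r/(γ*q0)*P - 1) + (r/(ν*q0))*(r/(ν*q0))*P = 1 := by
  field_simp
  linear_combination (-(r*P)) * hkey

lemma core3 (γ ν q0 r s P : ℝ) (hγ : γ ≠ 0) (hν : ν ≠ 0) (hq0 : q0 ≠ 0) (hr : r ≠ 0) :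
    s/(ν*q0)*(r/(γ*q0)*P - 1) + (r⁻¹*(r/(ν*q0))*s - (s/(γ*q0))*(r/(ν*q0))*P) = 0 := by
  field_simp
  ring

lemma final_part (a b : Fin 4 → ℝ) (ν φ : ℝ) (hν : 0 < ν)
    (haa : a ⬝ᵥ a = 1) (hbb : b ⬝ᵥ b = 1) (hab : a ⬝ᵥ b = 0) :
    ((Real.sin φ • a + Real.cos φ • b) ⬝ᵥ (Real.sin φ • a + Real.cos φ • b) = 1 ∧
      (Real.sin φ • a + Real.cos φ • b) ⬝ᵥ (ν • (-Real.cos φ • a + Real.sin φ • b)) = 0 ∧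
      ν • (-Real.cos φ • a + Real.sin φ • b) ≠ 0) := by
  have hba : b ⬝ᵥ a = 0 := by rw [dotProduct_comm]; exact hab
  refine ⟨?_, ?_, ?_⟩
  · simp only [add_dotProduct, dotProduct_add, smul_dotProduct,
      dotProduct_smul, smul_eq_mul, haa, hbb, hab, hba]
    nlinarith [Real.sin_sq_add_cos_sq φ]
  · simp only [add_dotProduct, dotProduct_add, smul_dotProduct,
      dotProduct_smul, smul_eq_mul, haa, hbb, hab, hba, neg_mul, mul_neg, mul_zero,
      mul_one, neg_smul, neg_dotProduct, dotProduct_neg]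
    ring
  · intro hzero
    have hyy : (ν • (-Real.cos φ • a + Real.sin φ • b)) ⬝ᵥ
        (ν • (-Real.cos φ • a + Real.sin φ • b)) = ν^2 := by
      simp only [add_dotProduct, dotProduct_add, smul_dotProduct,
        dotProduct_smul, smul_eq_mul, haa, hbb, hab, hba, neg_mul, mul_neg, mul_zero,
        mul_one, neg_smul, neg_dotProduct, dotProduct_neg, neg_neg]
      nlinarith [Real.sin_sq_add_cos_sq φ]
    rw [hzero] at hyy
    simp only [zero_dotProduct] at hyy
    nlinarith [hν]

theorem LS_alpha_beta_orthonormal (γ : ℝ) (hγ : 0 < γ)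
    (p : (Fin 4 → ℝ) × (Fin 4 → ℝ)) (hp : p ∈ TS3) (hqnz : sp p.1 ≠ 0)
    (hq0 : 0 < p.1 0) (hE : Een γ p < 0) (φ : ℝ) :
    alphaLS γ p ⬝ᵥ alphaLS γ p = 1 ∧
    betaLS γ p ⬝ᵥ betaLS γ p = 1 ∧
    alphaLS γ p ⬝ᵥ betaLS γ p = 0 ∧
    ((Real.sin φ • alphaLS γ p + Real.cos φ • betaLS γ p) ⬝ᵥ
        (Real.sin φ • alphaLS γ p + Real.cos φ • betaLS γ p) = 1 ∧
      (Real.sin φ • alphaLS γ p + Real.cos φ • betaLS γ p) ⬝ᵥ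
        (nuLS γ p • (-Real.cos φ • alphaLS γ p + Real.sin φ • betaLS γ p)) = 0 ∧
      nuLS γ p • (-Real.cos φ • alphaLS γ p + Real.sin φ • betaLS γ p) ≠ 0) := by
  obtain ⟨h1, h2⟩ := hp
  set q0 := p.1 0 with hq0def
  set v0 := p.2 0 with hv0def
  set Q := sp p.1 with hQdef
  set V := sp p.2 with hVdef
  have h1' : q0^2 + Q ⬝ᵥ Q = 1 := by
    have h := split_dot p.1 p.1; rw [h1] at h; linear_combination -h
  have h2' : q0*v0 + Q ⬝ᵥ V = 0 := by
    have h := split_dot p.1 p.2; rw [h2] at h; linear_combination -h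
  have hQQnn : 0 ≤ Q ⬝ᵥ Q := Finset.sum_nonneg fun i _ => mul_self_nonneg _
  have hQQpos : 0 < Q ⬝ᵥ Q := by
    rcases hQQnn.lt_or_eq with h | h
    · exact h
    · exact absurd ((dotProduct_self_eq_zero).1 h.symm) hqnz
  set r := nrm3 Q with hrdef
  have hrQ : r = Real.sqrt (Q ⬝ᵥ Q) := rfl
  have hrpos : 0 < r := by rw [hrQ]; exact Real.sqrt_pos.2 hQQpos
  have hr2 : r^2 = Q ⬝ᵥ Q := by rw [hrQ]; exact Real.sq_sqrt hQQnn
  set s := Q ⬝ᵥ pivec p with hsdef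
  set P := pivec p ⬝ᵥ pivec p with hPdef
  have hsqrt : Real.sqrt (1 - q0^2) = r := by
    rw [show 1 - q0^2 = Q ⬝ᵥ Q by linarith, hrQ]
  have hmumu : mu p ⬝ᵥ mu p = (Q ⬝ᵥ Q)*(V ⬝ᵥ V) - (Q ⬝ᵥ V)^2 := lagrange Q V
  have hvv : p.2 ⬝ᵥ p.2 = v0^2 + V ⬝ᵥ V := by
    have h := split_dot p.2 p.2; rw [h]; ring
  have hP : P = p.2 ⬝ᵥ p.2 - mu p ⬝ᵥ mu p := by
    rw [hPdef, pivec_self p, hvv, hmumu]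
    linear_combination (V ⬝ᵥ V + v0^2) * h1' - (Q ⬝ᵥ V + q0*v0) * h2'
  have hEen : Een γ p = (1/2)*(p.2 ⬝ᵥ p.2) - γ*q0/r - (mu p ⬝ᵥ mu p)/2 := by
    unfold Een Hham; rw [hsqrt]
  have hγ' : γ ≠ 0 := hγ.ne'
  have hq0' : q0 ≠ 0 := hq0.ne'
  have hr' : r ≠ 0 := hrpos.ne'
  have hrr : r⁻¹ * r = 1 := inv_mul_cancel₀ hr'
  have hEr : (-2 * Een γ p) * r = 2*γ*q0 - r*P := by
    rw [hEen]
    linear_combination r * hP + 2*γ*q0*hrr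
  have hm : 0 < -2*Een γ p := by linarith
  have hνpos : 0 < nuLS γ p := div_pos hγ (Real.sqrt_pos.2 hm)
  have hν2 : nuLS γ p^2 * (-2*Een γ p) = γ^2 := by
    unfold nuLS
    rw [div_pow, Real.sq_sqrt hm.le]
    exact div_mul_cancel₀ _ hm.ne'
  have hkey : nuLS γ p^2 * (2*γ*q0 - r*P) = γ^2*r := by
    rw [← hEr]; linear_combination r * hν2
  have hν' : nuLS γ p ≠ 0 := hνpos.ne'
  have hA : alphaLS γ p = Fin.cons (s/(nuLS γ p * q0)) (r⁻¹ • Q - (s/(γ*q0)) • pivec p) := rfl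
  have hB : betaLS γ p = Fin.cons (r/(γ*q0)*P - 1) ((r/(nuLS γ p * q0)) • pivec p) := rfl
  have hpiQ : pivec p ⬝ᵥ Q = s := by rw [dotProduct_comm]
  have haa : alphaLS γ p ⬝ᵥ alphaLS γ p = 1 := by
    rw [hA, cons_dot]
    have hvec : (r⁻¹ • Q - (s/(γ*q0)) • pivec p) ⬝ᵥ (r⁻¹ • Q - (s/(γ*q0)) • pivec p)
        = r⁻¹*r⁻¹*(Q ⬝ᵥ Q) - 2*(r⁻¹*(s/(γ*q0))*s) + (s/(γ*q0))*(s/(γ*q0))*P := by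
      simp only [sub_dotProduct, dotProduct_sub, smul_dotProduct,
        dotProduct_smul, smul_eq_mul, hpiQ, ← hsdef, ← hPdef]
      ring
    rw [hvec]
    exact core1 γ (nuLS γ p) q0 r s P (Q ⬝ᵥ Q) hγ' hν' hq0' hr' hr2 hkey
  have hbb : betaLS γ p ⬝ᵥ betaLS γ p = 1 := by
    rw [hB, cons_dot]
    have hvec : ((r/(nuLS γ p * q0)) • pivec p) ⬝ᵥ ((r/(nuLS γ p * q0)) • pivec p)
        = (r/(nuLS γ p * q0))*(r/(nuLS γ p * q0))*P := by
      simp only [smul_dotProduct, dotProduct_smul, smul_eq_mul, ← hPdef]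
      ring
    rw [hvec]
    exact core2 γ (nuLS γ p) q0 r P hγ' hν' hq0' hr' hkey
  have hab : alphaLS γ p ⬝ᵥ betaLS γ p = 0 := by
    rw [hA, hB, cons_dot]
    have hvec : (r⁻¹ • Q - (s/(γ*q0)) • pivec p) ⬝ᵥ ((r/(nuLS γ p * q0)) • pivec p)
        = r⁻¹*(r/(nuLS γ p * q0))*s - (s/(γ*q0))*(r/(nuLS γ p * q0))*P := by
      simp only [sub_dotProduct, smul_dotProduct,
        dotProduct_smul, smul_eq_mul, ← hsdef, ← hPdef]
      ring
    rw [hvec]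
    exact core3 γ (nuLS γ p) q0 r s P hγ' hν' hq0' hr'
  have hba : betaLS γ p ⬝ᵥ alphaLS γ p = 0 := by
    rw [dotProduct_comm]; exact hab
  exact ⟨haa, hbb, hab, final_part _ _ _ φ hνpos haa hbb hab⟩

end
end

section
/- Let (q(t),v(t)) be a solution of the Kepler equations on S³ lying in TS³ with 0 < q0(t) < 1, 𝐪(t) ≠ 0 and E < 0, and set (x(t),y(t)) = Φ(q(t),v(t)) where Φ is the Ligon–Schaaf map with phase φ = (𝐪·𝛑)/(νq0). Then dx/dt = (1/q0²)·γ²y/⟨y,y⟩² and dy/dt = −(1/q0²)·γ²x/⟨y,y⟩; i.e., Φ maps the Kepler vector field X_H to (1/q0²) times the Delaunay vector field X_ℋ, so the two vector fields are C^∞-equivalent with time reparametrization τ(t) = ∫_{t0}^{t} ds/q0(s)². -/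
open Matrix Real

noncomputable section

theorem HasDerivAt.congr_d {E : Type*} [NormedAddCommGroup E] [NormedSpace ℝ E]
    {f : ℝ → E} {a b : E} {t : ℝ} (h : HasDerivAt f a t) (hab : a = b) :
    HasDerivAt f b t := hab ▸ h

theorem hasDerivAt_dot {n : ℕ} {f g : ℝ → Fin n → ℝ} {f' g' : Fin n → ℝ} {t : ℝ}
    (hf : HasDerivAt f f' t) (hg : HasDerivAt g g' t) :
    HasDerivAt (fun s => f s ⬝ᵥ g s) (f' ⬝ᵥ g t + f t ⬝ᵥ g') t := by
  simp only [dotProduct]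
  refine (HasDerivAt.fun_sum (u := Finset.univ)
    (A := fun i (s : ℝ) => f s i * g s i)
    (A' := fun i => f' i * g t i + f t i * g' i)
    (fun i _ => ((hasDerivAt_pi.1 hf i).mul (hasDerivAt_pi.1 hg i)))).congr_d ?_
  rw [Finset.sum_add_distrib]

theorem lagrange3 (a b : Fin 3 → ℝ) :
    (crossProduct a b) ⬝ᵥ (crossProduct a b) = (a ⬝ᵥ a) * (b ⬝ᵥ b) - (a ⬝ᵥ b) ^ 2 := by
  simp [crossProduct, dotProduct, Fin.sum_univ_succ]
  ring

theorem dot_split4 (a b : Fin 4 → ℝ) :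
    a ⬝ᵥ b = a 0 * b 0 + sp a ⬝ᵥ sp b := by
  simp [dotProduct, sp, Fin.sum_univ_succ]

theorem cons_dot_cons (a b : ℝ) (f g : Fin 3 → ℝ) :
    (Fin.cons a f : Fin 4 → ℝ) ⬝ᵥ (Fin.cons b g : Fin 4 → ℝ) = a * b + f ⬝ᵥ g := by
  simp [dotProduct, Fin.sum_univ_succ]

set_option maxHeartbeats 1000000 in
theorem auxLS (γ : ℝ) (hγ : 0 < γ) (t : ℝ) (q v : ℝ → Fin 4 → ℝ)
    (hq : HasDerivAt q (v t) t) (hv : HasDerivAt v (keplerRHS γ (q t) (v t)) t)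
    (hqq : q t ⬝ᵥ q t = 1) (hqv : q t ⬝ᵥ v t = 0)
    (h0 : 0 < q t 0) (h1 : q t 0 < 1) (hEt : Een γ (q t, v t) < 0) :
    HasDerivAt (fun s => (PhiLS γ (q s, v s)).1)
        ((1 / q t 0 ^ 2) •
          ((γ ^ 2 / ((PhiLS γ (q t, v t)).2 ⬝ᵥ (PhiLS γ (q t, v t)).2) ^ 2) •
            (PhiLS γ (q t, v t)).2)) t ∧
      HasDerivAt (fun s => (PhiLS γ (q s, v s)).2)
        ((1 / q t 0 ^ 2) •
          (-(γ ^ 2 / ((PhiLS γ (q t, v t)).2 ⬝ᵥ (PhiLS γ (q t, v t)).2)) •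
            (PhiLS γ (q t, v t)).1)) t := by
  have hγ' : γ ≠ 0 := ne_of_gt hγ
  have h00 : q t 0 ≠ 0 := ne_of_gt h0
  have hr2pos : (0:ℝ) < 1 - q t 0 ^ 2 := by nlinarith
  set r := Real.sqrt (1 - q t 0 ^ 2) with hrdef
  have hrpos : 0 < r := Real.sqrt_pos.2 hr2pos
  have hrne : r ≠ 0 := ne_of_gt hrpos
  have hr2 : r ^ 2 = 1 - q t 0 ^ 2 := Real.sq_sqrt hr2pos.le
  -- basic dot product facts at time t
  have hQQ : sp (q t) ⬝ᵥ sp (q t) = 1 - q t 0 ^ 2 := by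
    have h := dot_split4 (q t) (q t); rw [hqq] at h; linear_combination -h
  have hQV : sp (q t) ⬝ᵥ sp (v t) = -(q t 0 * v t 0) := by
    have h := dot_split4 (q t) (v t); rw [hqv] at h; linear_combination -h
  have hVV : sp (v t) ⬝ᵥ sp (v t) = v t ⬝ᵥ v t - v t 0 ^ 2 := by
    have h := dot_split4 (v t) (v t); linear_combination -h
  have hnrm : nrm3 (sp (q t)) = r := by rw [nrm3, hQQ]
  have hVQ : sp (v t) ⬝ᵥ sp (q t) = -(q t 0 * v t 0) := by
    rw [dotProduct_comm]; exact hQV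
  have hpiv : pivec (q t, v t) = q t 0 • sp (v t) - v t 0 • sp (q t) := rfl
  have hQπ : sp (q t) ⬝ᵥ pivec (q t, v t) = -(v t 0) := by
    rw [hpiv, dotProduct_sub, dotProduct_smul, dotProduct_smul, hQV, hQQ]
    simp only [smul_eq_mul]; ring
  have hVπ : sp (v t) ⬝ᵥ pivec (q t, v t) = q t 0 * (v t ⬝ᵥ v t) := by
    rw [hpiv, dotProduct_sub, dotProduct_smul, dotProduct_smul, hVV, hVQ]
    simp only [smul_eq_mul]; ring
  have hππ : pivec (q t, v t) ⬝ᵥ pivec (q t, v t)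
      = q t 0 ^ 2 * (v t ⬝ᵥ v t) + v t 0 ^ 2 := by
    rw [hpiv]
    simp only [sub_dotProduct, dotProduct_sub, smul_dotProduct, dotProduct_smul,
      smul_eq_mul, hVV, hQV, hVQ, hQQ]
    ring
  have hμ : mu (q t, v t) ⬝ᵥ mu (q t, v t)
      = (1 - q t 0 ^ 2) * (v t ⬝ᵥ v t - v t 0 ^ 2) - (q t 0 * v t 0) ^ 2 := by
    show (crossProduct (sp (q t)) (sp (v t))) ⬝ᵥ (crossProduct (sp (q t)) (sp (v t))) = _
    rw [lagrange3, hQQ, hVV, hQV]; ring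
  have hE2 : -2 * Een γ (q t, v t)
      = 2 * γ * q t 0 / r - (q t 0 ^ 2 * (v t ⬝ᵥ v t) + v t 0 ^ 2) := by
    show -2 * (Hham γ (q t, v t) - (mu (q t, v t) ⬝ᵥ mu (q t, v t)) / 2) = _
    rw [hμ]
    show -2 * ((1/2) * (v t ⬝ᵥ v t) - γ * q t 0 / Real.sqrt (1 - q t 0 ^ 2) - _ / 2) = _
    rw [← hrdef]; ring
  have hE2pos : 0 < 2 * γ * q t 0 / r - (q t 0 ^ 2 * (v t ⬝ᵥ v t) + v t 0 ^ 2) := by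
    rw [← hE2]; linarith
  have hnvpos : 0 < nuLS γ (q t, v t) :=
    div_pos hγ (Real.sqrt_pos.2 (by linarith))
  have hnvne : nuLS γ (q t, v t) ≠ 0 := ne_of_gt hnvpos
  have hν2 : (nuLS γ (q t, v t)) ^ 2
      * (2 * γ * q t 0 - (q t 0 ^ 2 * (v t ⬝ᵥ v t) + v t 0 ^ 2) * r) = γ ^ 2 * r := by
    have hnv2 : (nuLS γ (q t, v t)) ^ 2 = γ ^ 2 / (-2 * Een γ (q t, v t)) := by
      rw [nuLS, div_pow, Real.sq_sqrt (by linarith)]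
    rw [hnv2, hE2]
    rw [div_mul_eq_mul_div, div_eq_iff (by positivity)]
    field_simp
  -- the power identity
  have hpow : (1 - q t 0 ^ 2) ^ ((3:ℝ)/2) = r ^ 3 := by
    rw [hrdef, show ((3:ℝ)/2) = (1/2) * ((3:ℕ):ℝ) by norm_num,
      Real.rpow_mul hr2pos.le, Real.rpow_natCast, ← Real.sqrt_eq_rpow]
  -- kepler RHS components
  have hkep0 : keplerRHS γ (q t) (v t) 0
      = γ / r ^ 3 - (v t ⬝ᵥ v t + γ * q t 0 / r ^ 3) * q t 0 := by
    simp [keplerRHS, e0, hpow]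
  have hkepsp : sp (keplerRHS γ (q t) (v t))
      = (-(v t ⬝ᵥ v t + γ * q t 0 / r ^ 3)) • sp (q t) := by
    funext i
    simp [keplerRHS, sp, e0, hpow, Fin.succ_ne_zero]
    ring
  have hq0' : HasDerivAt (fun s => q s 0) (v t 0) t := hasDerivAt_pi.1 hq 0
  have hv0' : HasDerivAt (fun s => v s 0)
      (γ / r ^ 3 - (v t ⬝ᵥ v t + γ * q t 0 / r ^ 3) * q t 0) t :=
    (hasDerivAt_pi.1 hv 0).congr_d hkep0
  have hQ' : HasDerivAt (fun s => sp (q s)) (sp (v t)) t :=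
    hasDerivAt_pi.2 fun (i : Fin 3) => hasDerivAt_pi.1 hq i.succ
  have hV' : HasDerivAt (fun s => sp (v s))
      ((-(v t ⬝ᵥ v t + γ * q t 0 / r ^ 3)) • sp (q t)) t :=
    (hasDerivAt_pi.2 fun (i : Fin 3) => hasDerivAt_pi.1 hv i.succ).congr_d hkepsp
  have hQQ' : HasDerivAt (fun s => sp (q s) ⬝ᵥ sp (q s)) (-(2 * (q t 0 * v t 0))) t :=
    (hasDerivAt_dot hQ' hQ').congr_d (by rw [hVQ, hQV]; ring)
  have hr' : HasDerivAt (fun s => nrm3 (sp (q s))) (-(q t 0 * v t 0) / r) t := by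
    have h := hQQ'.sqrt (by rw [hQQ]; exact ne_of_gt hr2pos)
    refine h.congr_d ?_
    rw [hQQ, ← hrdef]
    field_simp
  have hπ' : HasDerivAt (fun s => pivec (q s, v s)) ((-(γ / r ^ 3)) • sp (q t)) t := by
    have h := (hq0'.smul hV').sub (hv0'.smul hQ')
    refine h.congr_d ?_
    funext i
    simp only [Pi.sub_apply, Pi.add_apply, Pi.smul_apply, smul_eq_mul]
    ring
  have hs' : HasDerivAt (fun s => sp (q s) ⬝ᵥ pivec (q s, v s))
      (q t 0 * (v t ⬝ᵥ v t) - γ / r) t := by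
    refine (hasDerivAt_dot hQ' hπ').congr_d ?_
    rw [hVπ, dotProduct_smul, hQQ]
    simp only [smul_eq_mul]
    field_simp
    linear_combination γ * hr2
  have hπi : ∀ i, HasDerivAt (fun s => pivec (q s, v s) i) (-(γ / r ^ 3) * sp (q t) i) t :=
    fun i => (hasDerivAt_pi.1 hπ' i).congr_d (by simp)
  have hQi : ∀ i, HasDerivAt (fun s => sp (q s) i) (sp (v t) i) t :=
    fun i => hasDerivAt_pi.1 hQ' i
  have hvk : v t ⬝ᵥ keplerRHS γ (q t) (v t) = γ * v t 0 / r ^ 3 := by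
    rw [keplerRHS, dotProduct_sub, dotProduct_smul, dotProduct_smul]
    have he : v t ⬝ᵥ e0 = v t 0 := by simp [dotProduct, e0, Fin.sum_univ_four]
    rw [he, hpow, dotProduct_comm (v t) (q t), hqv]
    simp only [smul_eq_mul]; ring
  have hw' : HasDerivAt (fun s => v s ⬝ᵥ v s) (2 * (γ * v t 0 / r ^ 3)) t := by
    refine (hasDerivAt_dot hv hv).congr_d ?_
    rw [dotProduct_comm (keplerRHS γ (q t) (v t)) (v t), hvk]; ring
  have hsq' : HasDerivAt (fun s => Real.sqrt (1 - q s 0 ^ 2)) (-(q t 0 * v t 0) / r) t := by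
    have h := ((hasDerivAt_const t (1:ℝ)).sub (hq0'.pow 2)).sqrt (ne_of_gt hr2pos)
    refine h.congr_d ?_
    simp only [Pi.sub_apply, Pi.pow_apply]
    rw [← hrdef]
    field_simp
    ring
  have hH' : HasDerivAt (fun s => Hham γ (q s, v s)) 0 t := by
    have h2 := (hq0'.const_mul γ).div hsq' (by rw [← hrdef]; exact hrne)
    have h := (hw'.const_mul (1/2 : ℝ)).sub h2
    refine h.congr_d ?_
    rw [← hrdef]
    field_simp
    linear_combination (-(γ * v t 0)) * hr2
  have hQV' : HasDerivAt (fun s => sp (q s) ⬝ᵥ sp (v s))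
      ((v t ⬝ᵥ v t - v t 0 ^ 2)
        + -(v t ⬝ᵥ v t + γ * q t 0 / r ^ 3) * (1 - q t 0 ^ 2)) t := by
    refine (hasDerivAt_dot hQ' hV').congr_d ?_
    rw [hVV, dotProduct_smul, hQQ]
    simp [smul_eq_mul]
  have hVV' : HasDerivAt (fun s => sp (v s) ⬝ᵥ sp (v s))
      (2 * (v t ⬝ᵥ v t + γ * q t 0 / r ^ 3) * (q t 0 * v t 0)) t := by
    refine (hasDerivAt_dot hV' hV').congr_d ?_
    rw [smul_dotProduct, dotProduct_smul, hVQ, hQV]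
    simp only [smul_eq_mul]
    ring
  have hμμ' : HasDerivAt (fun s => mu (q s, v s) ⬝ᵥ mu (q s, v s)) 0 t := by
    have heq : (fun s => mu (q s, v s) ⬝ᵥ mu (q s, v s))
        = fun s => (sp (q s) ⬝ᵥ sp (q s)) * (sp (v s) ⬝ᵥ sp (v s))
            - (sp (q s) ⬝ᵥ sp (v s)) ^ 2 := by
      funext s; exact lagrange3 _ _
    rw [heq]
    refine ((hQQ'.mul hVV').sub ((hQV').pow 2)).congr_d ?_
    rw [hQQ, hVV, hQV]
    ring
  have hE' : HasDerivAt (fun s => Een γ (q s, v s)) 0 t :=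
    (hH'.sub (hμμ'.div_const 2)).congr_d (by norm_num)
  have hν' : HasDerivAt (fun s => nuLS γ (q s, v s)) 0 t := by
    have hEneg : (0:ℝ) < -2 * Een γ (q t, v t) := by linarith
    have hsqe := (hE'.const_mul (-2 : ℝ)).sqrt (ne_of_gt hEneg)
    have h := (hasDerivAt_const t γ).div hsqe (ne_of_gt (Real.sqrt_pos.2 hEneg))
    exact h.congr_d (by simp)
  -- more dot facts
  have hπQ : pivec (q t, v t) ⬝ᵥ sp (q t) = -(v t 0) := by
    rw [dotProduct_comm]; exact hQπ
  have hπV : pivec (q t, v t) ⬝ᵥ sp (v t) = q t 0 * (v t ⬝ᵥ v t) := by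
    rw [dotProduct_comm]; exact hVπ
  have hden : nuLS γ (q t, v t) * q t 0 ≠ 0 := mul_ne_zero hnvne h00
  -- derivative of the phase
  have hφ' : HasDerivAt (fun s => phiLS γ (q s, v s))
      ((q t 0 ^ 2 * (v t ⬝ᵥ v t) + v t 0 ^ 2 - γ * q t 0 / r)
        / (nuLS γ (q t, v t) * q t 0 ^ 2)) t := by
    have h := hs'.div (hν'.mul hq0') hden
    refine h.congr_d ?_
    rw [hQπ]
    simp only [Pi.mul_apply]
    field_simp
    ring
  -- derivative of α
  have hα' : HasDerivAt (fun s => alphaLS γ (q s, v s))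
      ((γ / (nuLS γ (q t, v t) * q t 0 * r)) • betaLS γ (q t, v t)) t := by
    apply hasDerivAt_pi.2
    intro i
    refine Fin.cases ?_ ?_ i
    · have h := hs'.div (hν'.mul hq0') hden
      have hfun : (fun s => alphaLS γ (q s, v s) 0)
          = fun s => (sp (q s) ⬝ᵥ pivec (q s, v s)) / (nuLS γ (q s, v s) * q s 0) := by
        funext s; simp [alphaLS]
      rw [hfun]
      refine h.congr_d ?_
      rw [hQπ]
      simp only [Pi.smul_apply, smul_eq_mul, betaLS, Fin.cons_zero, hnrm]
      rw [hππ]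
      simp only [Pi.mul_apply]
      field_simp
      ring
    · intro i
      have hfun : (fun s => alphaLS γ (q s, v s) i.succ)
          = fun s => (nrm3 (sp (q s)))⁻¹ * sp (q s) i
              - (sp (q s) ⬝ᵥ pivec (q s, v s)) / (γ * q s 0) * pivec (q s, v s) i := by
        funext s; simp [alphaLS, Fin.cons_succ]
      rw [hfun]
      have hrinv := hr'.inv (by rw [hnrm]; exact hrne)
      have hcd := hs'.div (hq0'.const_mul γ) (mul_ne_zero hγ' h00)
      refine ((hrinv.mul (hQi i)).sub (hcd.mul (hπi i))).congr_d ?_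
      simp only [Pi.smul_apply, smul_eq_mul, betaLS, Fin.cons_succ]
      rw [hnrm, hQπ]
      rw [show pivec (q t, v t) i = q t 0 * sp (v t) i - v t 0 * sp (q t) i by
        rw [hpiv]; simp]
      simp only [Pi.div_apply, Pi.inv_apply, hnrm, hQπ]
      field_simp
      linear_combination (v t 0 ^ 3 * nuLS γ (q t, v t) ^ 2 * r * sp (q t) i + (-1) * q t 0 * v t 0 ^ 2 * nuLS γ (q t, v t) ^ 2 * r * sp (v t) i + v t 0 * γ ^ 2 * r * sp (q t) i + q t 0 ^ 2 * v t 0 * (v t ⬝ᵥ v t) * nuLS γ (q t, v t) ^ 2 * r * sp (q t) i + (-1) * q t 0 * γ ^ 2 * r * sp (v t) i + (-1) * q t 0 * v t 0 * nuLS γ (q t, v t) ^ 2 * γ * sp (q t) i + (-1) * q t 0 ^ 3 * (v t ⬝ᵥ v t) * nuLS γ (q t, v t) ^ 2 * r * sp (v t) i + (2) * q t 0 ^ 2 * nuLS γ (q t, v t) ^ 2 * γ * sp (v t) i) * hr2 + ((-1) * v t 0 * sp (q t) i + q t 0 * sp (v t) i + q t 0 ^ 2 * v t 0 * sp (q t)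 i + (-1) * q t 0 ^ 3 * sp (v t) i) * hν2
  -- derivative of β
  have hππ' : HasDerivAt (fun s => pivec (q s, v s) ⬝ᵥ pivec (q s, v s))
      (2 * (γ * v t 0) / r ^ 3) t := by
    refine (hasDerivAt_dot hπ' hπ').congr_d ?_
    rw [smul_dotProduct, dotProduct_smul, hπQ, hQπ]
    simp only [smul_eq_mul]
    ring
  have hβ' : HasDerivAt (fun s => betaLS γ (q s, v s))
      ((-(γ / (nuLS γ (q t, v t) * q t 0 * r))) • alphaLS γ (q t, v t)) t := by
    apply hasDerivAt_pi.2
    intro i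
    refine Fin.cases ?_ ?_ i
    · have hfun : (fun s => betaLS γ (q s, v s) 0)
          = fun s => nrm3 (sp (q s)) / (γ * q s 0)
              * (pivec (q s, v s) ⬝ᵥ pivec (q s, v s)) - 1 := by
        funext s; simp [betaLS]
      rw [hfun]
      refine (((hr'.div (hq0'.const_mul γ) (mul_ne_zero hγ' h00)).mul hππ').sub_const 1).congr_d ?_
      simp only [Pi.smul_apply, smul_eq_mul, alphaLS, Fin.cons_zero]
      rw [hnrm, hππ, hQπ]
      simp only [Pi.mul_apply, Pi.div_apply, hnrm]
      field_simp
      linear_combination ((-1) * v t 0 ^ 3 * nuLS γ (q t, v t) ^ 2 * r + (-1) * q t 0 ^ 2 * v t 0 * (v t ⬝ᵥ v t) * nuLS γ (q t, v t) ^ 2 * r) * hr2 + (v t 0) * hν2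
    · intro i
      have hfun : (fun s => betaLS γ (q s, v s) i.succ)
          = fun s => nrm3 (sp (q s)) / (nuLS γ (q s, v s) * q s 0) * pivec (q s, v s) i := by
        funext s; simp [betaLS, Fin.cons_succ]
      rw [hfun]
      refine ((hr'.div (hν'.mul hq0') hden).mul (hπi i)).congr_d ?_
      simp only [Pi.smul_apply, smul_eq_mul, alphaLS, Fin.cons_succ, Pi.sub_apply]
      rw [hnrm, hQπ]
      rw [show pivec (q t, v t) i = q t 0 * sp (v t) i - v t 0 * sp (q t) i by
        rw [hpiv]; simp]
      simp only [Pi.mul_apply, Pi.div_apply, hnrm]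
      field_simp
      linear_combination (v t 0 ^ 2 * nuLS γ (q t, v t) * r * sp (q t) i + (-1) * q t 0 * v t 0 * nuLS γ (q t, v t) * r * sp (v t) i) * hr2 + (0) * hν2
  -- Ligon-Schaaf identities
  have hαα : alphaLS γ (q t, v t) ⬝ᵥ alphaLS γ (q t, v t) = 1 := by
    simp only [alphaLS]
    rw [cons_dot_cons]
    simp only [dotProduct_sub, sub_dotProduct, dotProduct_smul, smul_dotProduct,
      smul_eq_mul, hnrm]
    rw [hQQ, hQπ, hπQ, hππ]
    field_simp
    linear_combination ((-1) * q t 0 ^ 2 * nuLS γ (q t, v t) ^ 2 * γ ^ 2) * hr2 + ((-1) * v t 0 ^ 2 * r) * hν2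
  have hββ : betaLS γ (q t, v t) ⬝ᵥ betaLS γ (q t, v t) = 1 := by
    simp only [betaLS]
    rw [cons_dot_cons]
    simp only [dotProduct_smul, smul_dotProduct, smul_eq_mul, hnrm]
    rw [hππ]
    field_simp
    linear_combination (0) * hr2 + ((-1) * v t 0 ^ 2 * r + (-1) * q t 0 ^ 2 * (v t ⬝ᵥ v t) * r) * hν2
  have hαβ : alphaLS γ (q t, v t) ⬝ᵥ betaLS γ (q t, v t) = 0 := by
    simp only [alphaLS, betaLS]
    rw [cons_dot_cons]
    simp only [dotProduct_sub, sub_dotProduct, dotProduct_smul, smul_dotProduct,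
      smul_eq_mul, hnrm]
    rw [hQπ, hππ]
    field_simp
    ring
  have hβα : betaLS γ (q t, v t) ⬝ᵥ alphaLS γ (q t, v t) = 0 := by
    rw [dotProduct_comm]; exact hαβ
  -- the key scalar identity
  have hkey : (q t 0 ^ 2 * (v t ⬝ᵥ v t) + v t 0 ^ 2 - γ * q t 0 / r)
        / (nuLS γ (q t, v t) * q t 0 ^ 2) - γ / (nuLS γ (q t, v t) * q t 0 * r)
      = -(γ ^ 2 / (nuLS γ (q t, v t) ^ 3 * q t 0 ^ 2)) := by
    field_simp
    linear_combination (0) * hr2 + ((-1)) * hν2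
  -- the norm of y
  have hyy : (PhiLS γ (q t, v t)).2 ⬝ᵥ (PhiLS γ (q t, v t)).2
      = nuLS γ (q t, v t) ^ 2 := by
    show (nuLS γ (q t, v t) • (-Real.cos (phiLS γ (q t, v t)) • alphaLS γ (q t, v t)
        + Real.sin (phiLS γ (q t, v t)) • betaLS γ (q t, v t)))
      ⬝ᵥ (nuLS γ (q t, v t) • (-Real.cos (phiLS γ (q t, v t)) • alphaLS γ (q t, v t)
        + Real.sin (phiLS γ (q t, v t)) • betaLS γ (q t, v t))) = nuLS γ (q t, v t) ^ 2
    simp only [smul_dotProduct, dotProduct_smul, add_dotProduct, dotProduct_add,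
      smul_eq_mul]
    rw [hαα, hββ, hαβ, hβα]
    have hsc := Real.sin_sq_add_cos_sq (phiLS γ (q t, v t))
    linear_combination (nuLS γ (q t, v t)) ^ 2 * hsc
  have hninv : nuLS γ (q t, v t) * (nuLS γ (q t, v t))⁻¹ = 1 := mul_inv_cancel₀ hnvne
  constructor
  · have hx := (hφ'.sin.smul hα').add (hφ'.cos.smul hβ')
    rw [hyy]
    have h2v : (PhiLS γ (q t, v t)).2
        = nuLS γ (q t, v t) • (-Real.cos (phiLS γ (q t, v t)) • alphaLS γ (q t, v t)
          + Real.sin (phiLS γ (q t, v t)) • betaLS γ (q t, v t)) := rfl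
    rw [h2v]
    refine hx.congr_d ?_
    funext i
    simp only [Pi.add_apply, Pi.smul_apply, Pi.neg_apply, smul_eq_mul, neg_mul]
    linear_combination (Real.cos (phiLS γ (q t, v t)) * alphaLS γ (q t, v t) i
      - Real.sin (phiLS γ (q t, v t)) * betaLS γ (q t, v t) i) * hkey
      + (γ ^ 2 * ((nuLS γ (q t, v t))⁻¹) ^ 3 * ((q t 0)⁻¹) ^ 2
        * (Real.cos (phiLS γ (q t, v t)) * alphaLS γ (q t, v t) i
          - Real.sin (phiLS γ (q t, v t)) * betaLS γ (q t, v t) i)) * hninv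
  · have hin := ((hφ'.cos.neg).smul hα').add (hφ'.sin.smul hβ')
    have hy := hν'.smul hin
    rw [hyy]
    have h1v : (PhiLS γ (q t, v t)).1
        = Real.sin (phiLS γ (q t, v t)) • alphaLS γ (q t, v t)
          + Real.cos (phiLS γ (q t, v t)) • betaLS γ (q t, v t) := rfl
    rw [h1v]
    refine hy.congr_d ?_
    funext i
    simp only [Pi.add_apply, Pi.smul_apply, Pi.neg_apply, smul_eq_mul, neg_mul]
    linear_combination (nuLS γ (q t, v t) * (Real.sin (phiLS γ (q t, v t)) * alphaLS γ (q t, v t) i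
      + Real.cos (phiLS γ (q t, v t)) * betaLS γ (q t, v t) i)) * hkey
      + (-(γ ^ 2 * ((nuLS γ (q t, v t))⁻¹) ^ 2 * ((q t 0)⁻¹) ^ 2)
        * (Real.cos (phiLS γ (q t, v t)) * betaLS γ (q t, v t) i
          + Real.sin (phiLS γ (q t, v t)) * alphaLS γ (q t, v t) i)) * hninv

theorem LS_map_conjugates_up_to_time_rescaling (γ : ℝ) (hγ : 0 < γ) (I : Set ℝ) (hI : Convex ℝ I)
    (q v : ℝ → Fin 4 → ℝ)
    (hq : ∀ t ∈ I, HasDerivAt q (v t) t)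
    (hv : ∀ t ∈ I, HasDerivAt v (keplerRHS γ (q t) (v t)) t)
    (hTS : ∀ t ∈ I, (q t, v t) ∈ TS3)
    (hq0 : ∀ t ∈ I, 0 < q t 0 ∧ q t 0 < 1)
    (hqnz : ∀ t ∈ I, sp (q t) ≠ 0)
    (hE : ∀ t ∈ I, Een γ (q t, v t) < 0) :
    ∀ t ∈ I,
      HasDerivAt (fun s => (PhiLS γ (q s, v s)).1)
        ((1 / q t 0 ^ 2) •
          ((γ ^ 2 / ((PhiLS γ (q t, v t)).2 ⬝ᵥ (PhiLS γ (q t, v t)).2) ^ 2) •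
            (PhiLS γ (q t, v t)).2)) t ∧
      HasDerivAt (fun s => (PhiLS γ (q s, v s)).2)
        ((1 / q t 0 ^ 2) •
          (-(γ ^ 2 / ((PhiLS γ (q t, v t)).2 ⬝ᵥ (PhiLS γ (q t, v t)).2)) •
            (PhiLS γ (q t, v t)).1)) t := by
  intro t ht
  exact auxLS γ hγ t q v (hq t ht) (hv t ht) (hTS t ht).1 (hTS t ht).2
    (hq0 t ht).1 (hq0 t ht).2 (hE t ht)

end
end
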